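/- Let A be a commutative unital ℝ-algebra. Then for every k ≥ 0 the Connes map annihilates Hochschild boundaries: 𝔠_k ∘ b = 0 as a map A^{⊗(k+2)} → Ω^k. Hence 𝔠 = (𝔠_k)_{k≥0} is a morphism of complexes from the Hochschild chain complex (C_•, b) to the complex of Kähler differential forms (Ω^•, 0) with zero differential. -/

import Mathlib

open scoped BigOperators

/-- A decomposable element `u 0 ∧ u 1 ∧ ⋯ ∧ u (m-1)` of the `m`-th exterior power
`Λ^m_R M`, realized as a submodule of the exterior algebra. -/
def wedgeDec (R M : Type) [CommRing R] [AddCommGroup M] [Module R M] (m : ℕ)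
    (u : Fin m → M) : (⋀[R]^m M : Submodule R (ExteriorAlgebra R M)) :=
  ⟨ExteriorAlgebra.ιMulti R m u,
    ExteriorAlgebra.ιMulti_range R m (Set.mem_range_self u)⟩

/-- The Connes map `𝔠_k` on an elementary Hochschild chain `a 0 ⊗ a 1 ⊗ ⋯ ⊗ a k`:
`𝔠_k(a₀ ⊗ ⋯ ⊗ a_k) = a₀ da₁ ∧ ⋯ ∧ da_k ∈ Ω^k = Λ^k_A Ω¹_{A/ℝ}`. -/
noncomputable def connesElem (A : Type) [CommRing A] [Algebra ℝ A] (k : ℕ) (a : ℕ → A) :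
    (⋀[A]^k (KaehlerDifferential ℝ A) :
      Submodule A (ExteriorAlgebra A (KaehlerDifferential ℝ A))) :=
  a 0 • wedgeDec A (KaehlerDifferential ℝ A) k
    (fun t : Fin k => KaehlerDifferential.D ℝ A (a ((t : ℕ) + 1)))

/-- Let `A` be a commutative unital `ℝ`-algebra.  Then for every `k ≥ 0`
the Connes map annihilates Hochschild boundaries: `𝔠_k ∘ b = 0` as a map
`A^{⊗(k+2)} → Ω^k`.  Hence `𝔠 = (𝔠_k)` is a morphism of complexes from the Hochschild
chain complex `(C_•, b)` to the complex of Kähler differential forms `(Ω^•, 0)`.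
(The identity is stated on every elementary chain `a 0 ⊗ ⋯ ⊗ a (k+1)`, with
`b(a₀ ⊗ ⋯ ⊗ a_{k+1}) = ∑_{i=0}^{k} (-1)^i a₀ ⊗ ⋯ ⊗ a_i a_{i+1} ⊗ ⋯ ⊗ a_{k+1}
 + (-1)^{k+1} a_{k+1} a₀ ⊗ a₁ ⊗ ⋯ ⊗ a_k` expanded by linearity of `𝔠_k`;
elementary chains span `A^{⊗(k+2)}`.) -/
theorem connes_map_annihilates_hochschild_boundaries
    (A : Type) [CommRing A] [Algebra ℝ A] (k : ℕ) (a : ℕ → A) :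
    (∑ i ∈ Finset.range (k + 1),
        ((-1 : ℤ) ^ i) •
          connesElem A k (fun p =>
            if p < i then a p else if p = i then a p * a (p + 1) else a (p + 1))) +
      ((-1 : ℤ) ^ (k + 1)) •
        connesElem A k (fun p => if p = 0 then a (k + 1) * a 0 else a p) = 0 := by
  classical
  rw [← ZeroMemClass.coe_eq_zero]
  simp only [Submodule.coe_add, AddSubmonoidClass.coe_finset_sum, AddSubgroupClass.coe_zsmul]
  set D := KaehlerDifferential.D ℝ A with hD
  set h : ℕ → Fin k → KaehlerDifferential ℝ A :=
    fun j t => if (t : ℕ) < j then D (a ((t : ℕ) + 1)) else D (a ((t : ℕ) + 2)) with hh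
  set Q : ℕ → ExteriorAlgebra A (KaehlerDifferential ℝ A) :=
    fun j => (a 0 * a (j + 1)) • ExteriorAlgebra.ιMulti A k (h j) with hQ
  have hcoe : ∀ f : ℕ → A,
      ((connesElem A k f :
          (⋀[A]^k (KaehlerDifferential ℝ A) : Submodule A _)) :
        ExteriorAlgebra A (KaehlerDifferential ℝ A)) =
        f 0 • ExteriorAlgebra.ιMulti A k
          (fun t : Fin k => D (f ((t : ℕ) + 1))) := fun f => rfl
  have h0 : ((connesElem A k (fun p =>
        if p < 0 then a p else if p = 0 then a p * a (p + 1) else a (p + 1)) :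
          (⋀[A]^k (KaehlerDifferential ℝ A) : Submodule A _)) :
        ExteriorAlgebra A (KaehlerDifferential ℝ A)) = Q 0 := by
    rw [hcoe]
    have h1 : (fun t : Fin k => D (if (t : ℕ) + 1 < 0 then a ((t : ℕ) + 1)
        else if (t : ℕ) + 1 = 0 then a ((t : ℕ) + 1) * a ((t : ℕ) + 2) else a ((t : ℕ) + 2)))
        = h 0 := by
      funext t
      simp [hh]
    rw [h1]
    simp [hQ]
  have hlast : ((connesElem A k (fun p => if p = 0 then a (k + 1) * a 0 else a p) :
          (⋀[A]^k (KaehlerDifferential ℝ A) : Submodule A _)) :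
        ExteriorAlgebra A (KaehlerDifferential ℝ A)) = Q k := by
    rw [hcoe, hQ]
    have h1 : (fun t : Fin k => D (if (t : ℕ) + 1 = 0 then a (k + 1) * a 0 else a ((t : ℕ) + 1)))
        = h k := by
      funext t
      simp [hh, t.isLt]
    rw [h1]
    simp [mul_comm]
  have hmid : ∀ i : ℕ, i < k →
      ((connesElem A k (fun p =>
          if p < i + 1 then a p else if p = i + 1 then a p * a (p + 1) else a (p + 1)) :
            (⋀[A]^k (KaehlerDifferential ℝ A) : Submodule A _)) :
          ExteriorAlgebra A (KaehlerDifferential ℝ A)) = Q i + Q (i + 1) := by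
    intro i hi
    rw [hcoe]
    have hg : (fun t : Fin k => D ((fun p =>
        if p < i + 1 then a p else if p = i + 1 then a p * a (p + 1) else a (p + 1))
          ((t : ℕ) + 1)))
        = Function.update (h (i + 1)) ⟨i, hi⟩ (D (a (i + 1) * a (i + 2))) := by
      funext t
      rcases eq_or_ne t ⟨i, hi⟩ with rfl | hne
      · simp
      · have hne' : (t : ℕ) ≠ i := fun hx => hne (Fin.ext hx)
        rw [Function.update_of_ne hne]
        rcases lt_or_gt_of_ne hne' with hlt | hgt
        · have h1 : (t : ℕ) + 1 < i + 1 := by omega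
          have h2 : (t : ℕ) < i + 1 := by omega
          simp [hh, hlt, h1, h2]
        · have h1 : ¬ ((t : ℕ) + 1 < i + 1) := by omega
          have h2 : (t : ℕ) + 1 ≠ i + 1 := by omega
          have h3 : ¬ ((t : ℕ) < i + 1) := by omega
          simp [hh, h1, h2, h3, hne']
    rw [hg, Derivation.leibniz, AlternatingMap.map_update_add,
      AlternatingMap.map_update_smul, AlternatingMap.map_update_smul]
    have hu1 : Function.update (h (i + 1)) ⟨i, hi⟩ (D (a (i + 2))) = h i := by
      funext t
      rcases eq_or_ne t ⟨i, hi⟩ with rfl | hne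
      · simp [hh]
      · have hne' : (t : ℕ) ≠ i := fun hx => hne (Fin.ext hx)
        rw [Function.update_of_ne hne]
        rcases lt_or_gt_of_ne hne' with hlt | hgt
        · have h1 : (t : ℕ) < i + 1 := by omega
          simp [hh, hlt, h1]
        · have h1 : ¬ ((t : ℕ) < i) := by omega
          have h2 : ¬ ((t : ℕ) < i + 1) := by omega
          simp [hh, h1, h2]
    have hu2 : Function.update (h (i + 1)) ⟨i, hi⟩ (D (a (i + 1))) = h (i + 1) := by
      have hv : D (a (i + 1)) = h (i + 1) ⟨i, hi⟩ := by simp [hh]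
      rw [hv, Function.update_eq_self]
    rw [hu1, hu2]
    have hc : (0 : ℕ) < i + 1 := Nat.succ_pos i
    simp only [hc, if_true]
    rw [smul_add, smul_smul, smul_smul, hQ]
  have key : ∀ i : ℕ, i < k →
      ((-1 : ℤ) ^ (i + 1)) •
        ((connesElem A k (fun p =>
            if p < i + 1 then a p else if p = i + 1 then a p * a (p + 1) else a (p + 1)) :
              (⋀[A]^k (KaehlerDifferential ℝ A) : Submodule A _)) :
            ExteriorAlgebra A (KaehlerDifferential ℝ A)) =
        ((-1 : ℤ) ^ (i + 1)) • Q (i + 1) - ((-1 : ℤ) ^ i) • Q i := by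
    intro i hi
    rw [hmid i hi, smul_add]
    have : ((-1 : ℤ) ^ (i + 1)) • Q i = -(((-1 : ℤ) ^ i) • Q i) := by
      rw [pow_succ, mul_neg_one, neg_smul]
    rw [this]
    abel
  rw [Finset.sum_range_succ']
  rw [Finset.sum_congr rfl (fun i hi => key i (Finset.mem_range.mp hi)),
    Finset.sum_range_sub (fun j => ((-1 : ℤ) ^ j) • Q j), h0, hlast]
  have : ((-1 : ℤ) ^ (k + 1)) • Q k = -(((-1 : ℤ) ^ k) • Q k) := by
    rw [pow_succ, mul_neg_one, neg_smul]
  rw [this]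
  simp only [pow_zero, one_smul]
  abel
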